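/- arXiv:2407.21212 — 2 statements merged into one kernel-verified Lean document; each statement's English description precedes it below -/
import Mathlib

section
/- Let $0<p<1$. Define $H, K : \mathbb{R} \to \mathbb{C}$ by $H(\theta) = \frac{1}{1-e^{i\theta}}$ and $K(\theta) = -\frac{1}{1+e^{i\theta}}$ (defined for almost every $\theta$). Then equality holds in the triangle inequality: $\left(\int_0^{2\pi} |H(\theta)+K(\theta)|^p \, \frac{d\theta}{2\pi}\right)^{1/p} = \left(\int_0^{2\pi} |H(\theta)|^p \, \frac{d\theta}{2\pi}\right)^{1/p} + \left(\int_0^{2\pi} |K(\theta)|^p \, \frac{d\theta}{2\pi}\right)^{1/p}$. (That is, for $h(z)=\frac{1}{1-z}$ and $k(z)=-h(-z)$ one has $\|h+k\|_{H^p} = \|h\|_{H^p} + \|k\|_{H^p}$.) -/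
open MeasureTheory

private lemma norm_one_sub_exp (θ : ℝ) :
    ‖(1:ℂ) - Complex.exp (θ * Complex.I)‖ = Real.sqrt (2 - 2 * Real.cos θ) := by
  rw [Complex.exp_mul_I, Complex.norm_def]
  congr 1
  push_cast [Complex.normSq_apply]
  simp [Complex.cos_ofReal_re, Complex.sin_ofReal_re]
  nlinarith [Real.sin_sq_add_cos_sq θ]

private lemma g_integrable (p : ℝ) (hp0 : 0 < p) (hp1 : p < 1) :
    IntervalIntegrable (fun θ : ℝ => ‖(1:ℂ) - Complex.exp (θ * Complex.I)‖⁻¹ ^ p)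
      volume 0 (2 * Real.pi) := by
  have pi_pos := Real.pi_pos
  have hD1 : IntervalIntegrable (fun x : ℝ => x ^ (-p)) volume 0 (2 * Real.pi) :=
    intervalIntegral.intervalIntegrable_rpow' (by linarith)
  have hD2 : IntervalIntegrable (fun x : ℝ => (2 * Real.pi - x) ^ (-p)) volume 0 (2 * Real.pi) := by
    have h := (hD1.comp_sub_left (2 * Real.pi)).symm
    simpa using h
  have hD : IntervalIntegrable
      (fun θ : ℝ => (Real.pi / 2) ^ p * (θ ^ (-p) + (2 * Real.pi - θ) ^ (-p)))
      volume 0 (2 * Real.pi) := (hD1.add hD2).const_mul _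
  refine hD.mono_fun' ?_ ?_
  · refine Measurable.aestronglyMeasurable ?_
    have h1 : Measurable fun θ : ℝ => ‖(1:ℂ) - Complex.exp (θ * Complex.I)‖⁻¹ :=
      ((measurable_const.sub
        (Complex.measurable_exp.comp (Complex.measurable_ofReal.mul_const _))).norm).inv
    exact h1.pow measurable_const
  · rw [Set.uIoc_of_le (by positivity)]
    refine (ae_restrict_iff' measurableSet_Ioc).mpr (ae_of_all _ fun θ hθ => ?_)
    obtain ⟨h0, h2⟩ := hθ
    have hgnn : (0:ℝ) ≤ ‖(1:ℂ) - Complex.exp (θ * Complex.I)‖⁻¹ ^ p :=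
      Real.rpow_nonneg (by positivity) _
    dsimp only
    rw [Real.norm_of_nonneg hgnn, norm_one_sub_exp]
    have key : ∀ u : ℝ, 0 < u → u ≤ Real.pi → Real.cos θ = Real.cos u →
        (Real.sqrt (2 - 2 * Real.cos θ))⁻¹ ^ p ≤ (Real.pi / 2) ^ p * u ^ (-p) := by
      intro u hu0 hupi hcos
      have hcosle : Real.cos u ≤ 1 - 2 / Real.pi ^ 2 * u ^ 2 :=
        Real.cos_le_one_sub_mul_cos_sq (by rw [abs_of_pos hu0]; exact hupi)
      have hsq : ((2 / Real.pi) * u) ^ 2 ≤ 2 - 2 * Real.cos θ := by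
        rw [hcos]
        have : (2 / Real.pi) ^ 2 = 2 * (2 / Real.pi ^ 2) := by
          field_simp
        nlinarith [sq_nonneg u]
      have hle : (2 / Real.pi) * u ≤ Real.sqrt (2 - 2 * Real.cos θ) := by
        rw [← Real.sqrt_sq (by positivity : (0:ℝ) ≤ (2 / Real.pi) * u)]
        exact Real.sqrt_le_sqrt hsq
      have hinv : (Real.sqrt (2 - 2 * Real.cos θ))⁻¹ ≤ ((2 / Real.pi) * u)⁻¹ :=
        inv_anti₀ (by positivity) hle
      calc (Real.sqrt (2 - 2 * Real.cos θ))⁻¹ ^ p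
          ≤ (((2 / Real.pi) * u)⁻¹) ^ p :=
            Real.rpow_le_rpow (by positivity) hinv hp0.le
        _ = ((Real.pi / 2) * u⁻¹) ^ p := by
            rw [mul_inv]
            congr 2
            field_simp
        _ = (Real.pi / 2) ^ p * (u⁻¹) ^ p :=
            Real.mul_rpow (by positivity) (by positivity)
        _ = (Real.pi / 2) ^ p * u ^ (-p) := by
            rw [Real.inv_rpow hu0.le, ← Real.rpow_neg hu0.le]
    rcases le_or_gt θ Real.pi with hle | hgt
    · have := key θ h0 hle rfl
      have hnn : (0:ℝ) ≤ (Real.pi / 2) ^ p * (2 * Real.pi - θ) ^ (-p) := by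
        have : (0:ℝ) ≤ 2 * Real.pi - θ := by linarith
        positivity
      nlinarith [this, hnn]
    · rcases eq_or_lt_of_le h2 with heq | hlt2
      · subst heq
        rw [Real.cos_two_pi, show (2:ℝ) - 2 * 1 = 0 by ring, Real.sqrt_zero, inv_zero,
          Real.zero_rpow hp0.ne']
        have h1 : (0:ℝ) ≤ (2 * Real.pi) ^ (-p) := Real.rpow_nonneg (by positivity) _
        have h2 : (0:ℝ) ≤ (2 * Real.pi - 2 * Real.pi) ^ (-p) :=
          Real.rpow_nonneg (by norm_num) _
        positivity
      · have hu0 : 0 < 2 * Real.pi - θ := by linarith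
        have hupi : 2 * Real.pi - θ ≤ Real.pi := by linarith
        have hcos : Real.cos θ = Real.cos (2 * Real.pi - θ) := by
          rw [Real.cos_two_pi_sub]
        have := key _ hu0 hupi hcos
        have hnn : (0:ℝ) ≤ (Real.pi / 2) ^ p * θ ^ (-p) := by positivity
        nlinarith [this, hnn]

/-- For `0 < p < 1`, the boundary functions `H(θ) = 1/(1-e^{iθ})` and
`K(θ) = -1/(1+e^{iθ})` of `h(z)=1/(1-z)` and `k(z)=-h(-z)` satisfy equality
in the triangle inequality for the `H^p` quasinorm. -/
theorem hardy_triangle_equality (p : ℝ) (hp0 : 0 < p) (hp1 : p < 1)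
    (H K : ℝ → ℂ)
    (hH : ∀ θ : ℝ, H θ = 1 / (1 - Complex.exp (θ * Complex.I)))
    (hK : ∀ θ : ℝ, K θ = -(1 / (1 + Complex.exp (θ * Complex.I)))) :
    ((∫ θ in (0:ℝ)..(2 * Real.pi), ‖H θ + K θ‖ ^ p) / (2 * Real.pi)) ^ (1 / p) =
      ((∫ θ in (0:ℝ)..(2 * Real.pi), ‖H θ‖ ^ p) / (2 * Real.pi)) ^ (1 / p) +
        ((∫ θ in (0:ℝ)..(2 * Real.pi), ‖K θ‖ ^ p) / (2 * Real.pi)) ^ (1 / p) := by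
  have pi_pos := Real.pi_pos
  set g : ℝ → ℝ := fun θ => ‖(1:ℂ) - Complex.exp (θ * Complex.I)‖⁻¹ ^ p with hgdef
  set A : ℝ := ∫ θ in (0:ℝ)..(2 * Real.pi), g θ with hA
  have hgint : IntervalIntegrable g volume 0 (2 * Real.pi) := g_integrable p hp0 hp1
  have hgper : Function.Periodic g (2 * Real.pi) := by
    intro θ
    simp only [hgdef]
    congr 3
    push_cast
    rw [add_mul, Complex.exp_add]
    simp [Complex.exp_two_pi_mul_I]
  -- the H integral
  have hHint : (∫ θ in (0:ℝ)..(2 * Real.pi), ‖H θ‖ ^ p) = A := by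
    refine intervalIntegral.integral_congr fun θ _ => ?_
    rw [hH θ, hgdef]
    simp [norm_div, one_div]
  -- the K integral
  have hKint : (∫ θ in (0:ℝ)..(2 * Real.pi), ‖K θ‖ ^ p) = A := by
    have h1 : (∫ θ in (0:ℝ)..(2 * Real.pi), ‖K θ‖ ^ p)
        = ∫ θ in (0:ℝ)..(2 * Real.pi), g (θ + Real.pi) := by
      refine intervalIntegral.integral_congr fun θ _ => ?_
      rw [hK θ, hgdef]
      simp only [norm_neg, one_div, norm_inv]
      congr 3
      push_cast
      rw [add_mul, Complex.exp_add, Complex.exp_pi_mul_I]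
      ring
    rw [h1, intervalIntegral.integral_comp_add_right g Real.pi]
    have h2 := hgper.intervalIntegral_add_eq Real.pi 0
    rw [zero_add] at h2
    rw [show (0:ℝ) + Real.pi = Real.pi by ring,
      show 2 * Real.pi + Real.pi = Real.pi + 2 * Real.pi by ring, h2]
  -- a.e. away from the bad set
  have hnull : (volume : Measure ℝ) {θ : ℝ | Complex.exp (2 * θ * Complex.I) = 1} = 0 := by
    refine measure_mono_null (t := Set.range (fun n : ℤ => (n : ℝ) * Real.pi)) ?_
      ((Set.countable_range _).measure_zero _)
    intro θ hθ
    rw [Set.mem_setOf_eq, Complex.exp_eq_one_iff] at hθ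
    obtain ⟨n, hn⟩ := hθ
    refine ⟨n, ?_⟩
    have h2 : (2 * θ : ℂ) = n * (2 * Real.pi) := by
      rw [mul_comm ((n:ℂ)) _] at hn
      exact mul_right_cancel₀ Complex.I_ne_zero (by linear_combination hn)
    have h3 : (2 * θ : ℝ) = n * (2 * Real.pi) := by exact_mod_cast h2
    show (n:ℝ) * Real.pi = θ
    linarith
  have hae : ∀ᵐ θ : ℝ, Complex.exp (2 * θ * Complex.I) ≠ 1 := by
    rw [MeasureTheory.ae_iff]
    simpa using hnull
  -- the sum integral
  have hSint : (∫ θ in (0:ℝ)..(2 * Real.pi), ‖H θ + K θ‖ ^ p) = 2 ^ p * A := by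
    have h1 : (∫ θ in (0:ℝ)..(2 * Real.pi), ‖H θ + K θ‖ ^ p)
        = ∫ θ in (0:ℝ)..(2 * Real.pi), 2 ^ p * g (2 * θ) := by
      refine intervalIntegral.integral_congr_ae ?_
      filter_upwards [hae] with θ hθ _
      set e : ℂ := Complex.exp (θ * Complex.I) with he
      have he2 : Complex.exp (((2 * θ : ℝ)) * Complex.I) = e ^ 2 := by
        rw [he, ← Complex.exp_nat_mul]
        push_cast
        ring_nf
      have hsq : e ^ 2 ≠ 1 := by
        intro h
        apply hθ
        rw [show (2 * (θ:ℂ)) * Complex.I = ((2 * θ : ℝ)) * Complex.I by push_cast; ring, he2, h]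
      have hne1 : (1 : ℂ) - e ≠ 0 := by
        intro h
        apply hsq
        have : e = 1 := by linear_combination -h
        rw [this]; ring
      have hne2 : (1 : ℂ) + e ≠ 0 := by
        intro h
        apply hsq
        have : e = -1 := by linear_combination h
        rw [this]; ring
      have hsum : H θ + K θ = 2 * e / (1 - e ^ 2) := by
        rw [hH θ, hK θ, ← he]
        have : (1:ℂ) - e ^ 2 = (1 - e) * (1 + e) := by ring
        rw [this]
        field_simp
        ring
      have henorm : ‖e‖ = 1 := by
        rw [he, Complex.norm_exp_ofReal_mul_I]
      rw [hsum, hgdef]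
      simp only
      rw [norm_div, norm_mul, henorm, Complex.norm_ofNat, mul_one, he2, div_eq_mul_inv]
      exact Real.mul_rpow (by norm_num) (by positivity)
    rw [h1, intervalIntegral.integral_const_mul]
    congr 1
    have h2 := intervalIntegral.integral_comp_mul_left (a := (0:ℝ)) (b := 2 * Real.pi) g (two_ne_zero (α := ℝ))
    rw [mul_zero, show (2:ℝ) * (2 * Real.pi) = 4 * Real.pi by ring] at h2
    rw [h2]
    have hint2 : IntervalIntegrable g volume (2 * Real.pi) (4 * Real.pi) := by
      have h3 := hgint.comp_sub_right (2 * Real.pi)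
      have heq : (fun x => g (x - 2 * Real.pi)) = g := funext fun x => hgper.sub_eq x
      rw [heq, zero_add, show 2 * Real.pi + 2 * Real.pi = 4 * Real.pi by ring] at h3
      exact h3
    rw [← intervalIntegral.integral_add_adjacent_intervals hgint hint2]
    have h4 := hgper.intervalIntegral_add_eq (2 * Real.pi) 0
    rw [zero_add, show 2 * Real.pi + 2 * Real.pi = 4 * Real.pi by ring] at h4
    rw [h4, ← hA]
    rw [smul_eq_mul]
    ring
  -- final arithmetic
  rw [hHint, hKint, hSint]
  have hAnn : 0 ≤ A := by
    rw [hA]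
    refine intervalIntegral.integral_nonneg (by positivity) fun θ _ => ?_
    exact Real.rpow_nonneg (by positivity) _
  have h2pi : (0:ℝ) < 2 * Real.pi := by positivity
  rw [show (2:ℝ) ^ p * A / (2 * Real.pi) = 2 ^ p * (A / (2 * Real.pi)) by ring]
  rw [Real.mul_rpow (Real.rpow_nonneg (by norm_num) _) (div_nonneg hAnn h2pi.le)]
  rw [← Real.rpow_mul (by norm_num : (0:ℝ) ≤ 2), mul_one_div_cancel hp0.ne', Real.rpow_one]
  ring
end

section
/- Let $0 < p < \frac12$. Define $f(z) = (1+z)^{4/p}$ and $g(z) = -f(-z) = -(1-z)^{4/p}$ on the unit disk $\mathbb{D}$, using the principal branch of the complex power (so that $1^{4/p} = 1$). Then $f$ and $g$ belong to the Bergman space $A^p$ and $\left(\int_{\mathbb{D}} |f(z)+g(z)|^p \, dA(z)\right)^{1/p} > \left(\int_{\mathbb{D}} |f(z)|^p \, dA(z)\right)^{1/p} + \left(\int_{\mathbb{D}} |g(z)|^p \, dA(z)\right)^{1/p}$, i.e., $f$ and $g$ fail the triangle inequality for $\|\cdot\|_{A^p}$. -/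
open MeasureTheory

namespace BergmanSmallPAux
open Real Set


lemma hball : {z : ℂ | ‖z‖ < 1} = Metric.ball (0:ℂ) 1 := by
  ext z; simp [Metric.mem_ball, dist_zero_right]

lemma hSm : MeasurableSet {z : ℂ | ‖z‖ < 1} := by
  rw [hball]; exact Metric.isOpen_ball.measurableSet

lemma hSfin : volume {z : ℂ | ‖z‖ < 1} < ⊤ := by
  rw [hball]; exact measure_ball_lt_top

/-- change of variables to polar coordinates for integrals over the unit disk -/
lemma disk_polar (F : ℂ → ℝ) (hF : Continuous F) :
    (∫ z in {z : ℂ | ‖z‖ < 1}, F z) =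
      ∫ r in Ioo (0:ℝ) 1, ∫ θ in Ioo (-π) π,
        r * F (↑r * (Real.cos θ + Real.sin θ * Complex.I)) := by
  have key := Complex.integral_comp_polarCoord_symm
      (Set.indicator {z : ℂ | ‖z‖ < 1} F)
  rw [MeasureTheory.integral_indicator hSm] at key
  rw [← key]
  have htarget : polarCoord.target = Set.Ioi (0:ℝ) ×ˢ Set.Ioo (-π) π := rfl
  rw [htarget]
  have step : (∫ p in Ioi (0:ℝ) ×ˢ Ioo (-π) π,
        p.1 • Set.indicator {z : ℂ | ‖z‖ < 1} F (Complex.polarCoord.symm p))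
      = ∫ p in Ioi (0:ℝ) ×ˢ Ioo (-π) π,
          (Ioo (0:ℝ) 1 ×ˢ Ioo (-π) π).indicator
            (fun q : ℝ × ℝ => q.1 * F (↑q.1 * (Real.cos q.2 + Real.sin q.2 * Complex.I))) p := by
    apply setIntegral_congr_fun (measurableSet_Ioi.prod measurableSet_Ioo)
    intro q hq
    obtain ⟨hq1, hq2⟩ := hq
    simp only [Complex.polarCoord_symm_apply, smul_eq_mul]
    have habs : ‖(↑q.1 * (Real.cos q.2 + Real.sin q.2 * Complex.I) : ℂ)‖ = |q.1| := by
      have h := Complex.norm_polarCoord_symm q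
      rw [Complex.polarCoord_symm_apply] at h
      simpa using h
    by_cases h : q.1 < 1
    · rw [Set.indicator_of_mem (show _ ∈ {z : ℂ | ‖z‖ < 1} by
          rw [Set.mem_setOf_eq, habs, abs_of_pos hq1]; exact h),
        Set.indicator_of_mem (show q ∈ Ioo (0:ℝ) 1 ×ˢ Ioo (-π) π from ⟨⟨hq1, h⟩, hq2⟩)]
    · rw [Set.indicator_of_notMem (show _ ∉ {z : ℂ | ‖z‖ < 1} by
          rw [Set.mem_setOf_eq, habs, abs_of_pos hq1]; exact h),
        Set.indicator_of_notMem (fun hmem => h hmem.1.2), mul_zero]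
  rw [step, setIntegral_indicator (measurableSet_Ioo.prod measurableSet_Ioo),
    Set.inter_eq_self_of_subset_right (Set.prod_mono Ioo_subset_Ioi_self subset_rfl)]
  have hcont : Continuous fun q : ℝ × ℝ =>
      q.1 * F (↑q.1 * (Real.cos q.2 + Real.sin q.2 * Complex.I)) := by
    apply continuous_fst.mul
    exact hF.comp <| (Complex.continuous_ofReal.comp continuous_fst).mul
      ((Complex.continuous_ofReal.comp (Real.continuous_cos.comp continuous_snd)).add
        ((Complex.continuous_ofReal.comp (Real.continuous_sin.comp continuous_snd)).mul
          continuous_const))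
  rw [Measure.volume_eq_prod, setIntegral_prod]
  exact ((hcont.continuousOn.integrableOn_compact (isCompact_Icc.prod isCompact_Icc)).mono_set
    (Set.prod_mono Ioo_subset_Icc_self Ioo_subset_Icc_self))



lemma trig_int (A B C : ℝ) :
    ∫ θ in (-π)..π, (A + B * Real.cos θ + C * Real.cos θ ^ 2) = (2*A + C) * π := by
  have h1 : IntervalIntegrable (fun _ : ℝ => A) volume (-π) π := intervalIntegrable_const
  have h2 : IntervalIntegrable (fun θ : ℝ => B * Real.cos θ) volume (-π) π :=
    (continuous_const.mul Real.continuous_cos).intervalIntegrable _ _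
  have h3 : IntervalIntegrable (fun θ : ℝ => C * Real.cos θ ^ 2) volume (-π) π :=
    (continuous_const.mul (Real.continuous_cos.pow 2)).intervalIntegrable _ _
  rw [intervalIntegral.integral_add (h1.add h2) h3, intervalIntegral.integral_add h1 h2,
    intervalIntegral.integral_const, intervalIntegral.integral_const_mul,
    intervalIntegral.integral_const_mul, integral_cos, integral_cos_sq]
  simp [Real.sin_pi, Real.cos_pi]
  ring

lemma int_abs_cos : ∫ θ in (-π)..π, |Real.cos θ| = 4 := by
  have hc : Continuous fun θ : ℝ => |Real.cos θ| := Real.continuous_cos.abs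
  have hpi := Real.pi_pos
  have i1 : ∫ θ in (-π)..(-(π/2)), |Real.cos θ| = 1 := by
    rw [intervalIntegral.integral_congr (g := fun θ => -Real.cos θ) ?_]
    · rw [intervalIntegral.integral_neg, integral_cos]; simp
    · intro x hx
      rw [Set.uIcc_of_le (by linarith)] at hx
      have hle : Real.cos x ≤ 0 := by
        rw [← Real.cos_neg]
        exact Real.cos_nonpos_of_pi_div_two_le_of_le (by linarith [hx.2]) (by linarith [hx.1])
      simp [abs_of_nonpos hle]
  have i2 : ∫ θ in (-(π/2))..(π/2), |Real.cos θ| = 2 := by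
    rw [intervalIntegral.integral_congr (g := fun θ => Real.cos θ) ?_]
    · rw [integral_cos]; simp; norm_num
    · intro x hx
      rw [Set.uIcc_of_le (by linarith)] at hx
      exact abs_of_nonneg (Real.cos_nonneg_of_mem_Icc hx)
  have i3 : ∫ θ in (π/2)..π, |Real.cos θ| = 1 := by
    rw [intervalIntegral.integral_congr (g := fun θ => -Real.cos θ) ?_]
    · rw [intervalIntegral.integral_neg, integral_cos]; simp
    · intro x hx
      rw [Set.uIcc_of_le (by linarith)] at hx
      have hle : Real.cos x ≤ 0 :=
        Real.cos_nonpos_of_pi_div_two_le_of_le hx.1 (by linarith [hx.2])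
      simp [abs_of_nonpos hle]
  have s1 := intervalIntegral.integral_add_adjacent_intervals
    (hc.intervalIntegrable (μ := volume) (-π) (-(π/2))) (hc.intervalIntegrable (μ := volume) (-(π/2)) (π/2))
  have s2 := intervalIntegral.integral_add_adjacent_intervals
    (hc.intervalIntegrable (μ := volume) (-π) (π/2)) (hc.intervalIntegrable (μ := volume) (π/2) π)
  rw [← s2, ← s1, i1, i2, i3]; norm_num

lemma poly135 (a b c : ℝ) : ∫ r in (0:ℝ)..1, (a*r + b*r^3 + c*r^5) = a/2 + b/4 + c/6 := by
  have h1 : IntervalIntegrable (fun r : ℝ => a*r) volume 0 1 :=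
    (continuous_const.mul continuous_id).intervalIntegrable _ _
  have h2 : IntervalIntegrable (fun r : ℝ => b*r^3) volume 0 1 :=
    (continuous_const.mul (continuous_pow 3)).intervalIntegrable _ _
  have h3 : IntervalIntegrable (fun r : ℝ => c*r^5) volume 0 1 :=
    (continuous_const.mul (continuous_pow 5)).intervalIntegrable _ _
  rw [intervalIntegral.integral_add (h1.add h2) h3, intervalIntegral.integral_add h1 h2,
    intervalIntegral.integral_const_mul, intervalIntegral.integral_const_mul,
    intervalIntegral.integral_const_mul, integral_id, integral_pow, integral_pow]
  norm_num
  ring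

lemma poly24 (a b : ℝ) : ∫ r in (0:ℝ)..1, (a*r^2 + b*r^4) = a/3 + b/5 := by
  have h1 : IntervalIntegrable (fun r : ℝ => a*r^2) volume 0 1 :=
    (continuous_const.mul (continuous_pow 2)).intervalIntegrable _ _
  have h2 : IntervalIntegrable (fun r : ℝ => b*r^4) volume 0 1 :=
    (continuous_const.mul (continuous_pow 4)).intervalIntegrable _ _
  rw [intervalIntegral.integral_add h1 h2, intervalIntegral.integral_const_mul,
    intervalIntegral.integral_const_mul, integral_pow, integral_pow]
  norm_num
  ring

-- |1 + s z|^4 pointwise identity in polar coordinates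
lemma ptwise (s r θ : ℝ) (hs : s^2 = 1) :
    r * ‖(1 + (s:ℂ) * (↑r * (Real.cos θ + Real.sin θ * Complex.I)))‖ ^ (4:ℕ)
      = r*(1+r^2)^2 + (4*s*r^2*(1+r^2)) * Real.cos θ + (4*r^3) * Real.cos θ ^ 2 := by
  set w : ℂ := 1 + (s:ℂ) * (↑r * (Real.cos θ + Real.sin θ * Complex.I)) with hw
  have hre : w.re = 1 + s*(r*Real.cos θ) := by
    simp only [hw, Complex.add_re, Complex.mul_re, Complex.mul_im, Complex.add_im,
      Complex.ofReal_re, Complex.ofReal_im, Complex.one_re, Complex.I_re, Complex.I_im]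
    ring
  have him : w.im = s*(r*Real.sin θ) := by
    simp only [hw, Complex.add_re, Complex.mul_re, Complex.mul_im, Complex.add_im,
      Complex.ofReal_re, Complex.ofReal_im, Complex.one_im, Complex.I_re, Complex.I_im]
    ring
  have h4 : ‖w‖ ^ (4:ℕ) = (w.re*w.re + w.im*w.im)^2 := by
    rw [show (4:ℕ) = 2*2 from rfl, pow_mul, Complex.sq_norm,
      Complex.normSq_apply]
  rw [h4, hre, him]
  have hsin : Real.sin θ ^ 2 = 1 - Real.cos θ ^ 2 := Real.sin_sq θ
  have key : (1 + s*(r*Real.cos θ))*(1 + s*(r*Real.cos θ))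
      + (s*(r*Real.sin θ))*(s*(r*Real.sin θ)) = 1 + 2*s*r*Real.cos θ + r^2 := by
    linear_combination (s^2*r^2) * hsin + r^2 * hs
  rw [key]
  linear_combination (4*r^3*(Real.cos θ)^2)*hs

lemma inner1 (s r : ℝ) (hs : s^2 = 1) :
    (∫ θ in Ioo (-π) π,
      r * ‖(1 + (s:ℂ) * (↑r * (Real.cos θ + Real.sin θ * Complex.I)))‖ ^ (4:ℕ))
      = π*(2*r) + π*(8*r^3) + π*(2*r^5) := by
  rw [← MeasureTheory.integral_Ioc_eq_integral_Ioo,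
    ← intervalIntegral.integral_of_le (by linarith [Real.pi_pos] : -π ≤ π)]
  rw [intervalIntegral.integral_congr
    (g := fun θ => r*(1+r^2)^2 + (4*s*r^2*(1+r^2)) * Real.cos θ + (4*r^3) * Real.cos θ ^ 2)
    (fun θ _ => ptwise s r θ hs), trig_int]
  ring

lemma diskA (s : ℝ) (hs : s^2 = 1) :
    (∫ z in {z : ℂ | ‖z‖ < 1}, ‖(1 + (s:ℂ)*z)‖ ^ (4:ℕ)) = 10 * π / 3 := by
  rw [disk_polar (fun z => ‖(1 + (s:ℂ)*z)‖ ^ (4:ℕ))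
    (by continuity)]
  rw [setIntegral_congr_fun measurableSet_Ioo
    (fun r _ => inner1 s r hs)]
  rw [← MeasureTheory.integral_Ioc_eq_integral_Ioo,
    ← intervalIntegral.integral_of_le (by norm_num : (0:ℝ) ≤ 1)]
  rw [show (fun r : ℝ => π*(2*r) + π*(8*r^3) + π*(2*r^5))
      = fun r : ℝ => (2*π)*r + (8*π)*r^3 + (2*π)*r^5 from funext fun r => by ring, poly135]
  ring

lemma diskB : (∫ z in {z : ℂ | ‖z‖ < 1}, 8*|z.re| * (1+z.re^2+z.im^2)) = 256/15 := by
  rw [disk_polar (fun z => 8*|z.re| * (1+z.re^2+z.im^2))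
    (by continuity)]
  have inner2 : ∀ r ∈ Ioo (0:ℝ) 1,
      (∫ θ in Ioo (-π) π,
        r * (8*|(↑r * (Real.cos θ + Real.sin θ * Complex.I) : ℂ).re|
          *(1+(↑r * (Real.cos θ + Real.sin θ * Complex.I) : ℂ).re^2
            +(↑r * (Real.cos θ + Real.sin θ * Complex.I) : ℂ).im^2)))
      = 32*r^2 + 32*r^4 := by
    intro r hr
    rw [← MeasureTheory.integral_Ioc_eq_integral_Ioo,
      ← intervalIntegral.integral_of_le (by linarith [Real.pi_pos] : -π ≤ π)]
    have hpt : ∀ θ : ℝ,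
        r * (8*|(↑r * (Real.cos θ + Real.sin θ * Complex.I) : ℂ).re|
          *(1+(↑r * (Real.cos θ + Real.sin θ * Complex.I) : ℂ).re^2
            +(↑r * (Real.cos θ + Real.sin θ * Complex.I) : ℂ).im^2))
        = (8*r^2*(1+r^2)) * |Real.cos θ| := by
      intro θ
      have hre : (↑r * (Real.cos θ + Real.sin θ * Complex.I) : ℂ).re = r * Real.cos θ := by
        simp only [Complex.add_re, Complex.mul_re, Complex.mul_im, Complex.add_im,
          Complex.ofReal_re, Complex.ofReal_im, Complex.I_re, Complex.I_im]
        ring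
      have him : (↑r * (Real.cos θ + Real.sin θ * Complex.I) : ℂ).im = r * Real.sin θ := by
        simp only [Complex.add_re, Complex.mul_re, Complex.mul_im, Complex.add_im,
          Complex.ofReal_re, Complex.ofReal_im, Complex.I_re, Complex.I_im]
        ring
      rw [hre, him, abs_mul, abs_of_pos hr.1]
      have hsin : Real.sin θ ^ 2 = 1 - Real.cos θ ^ 2 := Real.sin_sq θ
      have : (r * Real.cos θ)^2 + (r * Real.sin θ)^2 = r^2 := by
        linear_combination r^2 * hsin
      linear_combination (8*r^2*|Real.cos θ|) * this
    rw [intervalIntegral.integral_congr (g := fun θ => (8*r^2*(1+r^2)) * |Real.cos θ|)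
      (fun θ _ => hpt θ), intervalIntegral.integral_const_mul, int_abs_cos]
    ring
  rw [setIntegral_congr_fun measurableSet_Ioo inner2,
    ← MeasureTheory.integral_Ioc_eq_integral_Ioo,
    ← intervalIntegral.integral_of_le (by norm_num : (0:ℝ) ≤ 1), poly24]
  norm_num

lemma rpow_subadd {q a b : ℝ} (hq : 0 ≤ q) (hq1 : q ≤ 1) (ha : 0 ≤ a) (hb : 0 ≤ b) :
    (a+b)^q ≤ a^q + b^q := by
  have h := NNReal.rpow_add_le_add_rpow a.toNNReal b.toNNReal hq hq1
  have h2 := NNReal.coe_le_coe.2 h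
  push_cast at h2
  rwa [Real.coe_toNNReal _ ha, Real.coe_toNNReal _ hb] at h2

lemma rpow_sub_le {q A B : ℝ} (hq : 0 ≤ q) (hq1 : q ≤ 1) (hB : 0 ≤ B) (h : B ≤ A) :
    A^q - B^q ≤ (A-B)^q := by
  have h1 := rpow_subadd hq hq1 (sub_nonneg.2 h) hB
  rw [sub_add_cancel] at h1
  linarith

lemma abs_rpow_sub {q A B : ℝ} (hq : 0 ≤ q) (hq1 : q ≤ 1) (hA : 0 ≤ A) (hB : 0 ≤ B) :
    |A^q - B^q| ≤ |A-B|^q := by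
  rcases le_total B A with h | h
  · rw [abs_of_nonneg (sub_nonneg.2 h),
      abs_of_nonneg (sub_nonneg.2 (Real.rpow_le_rpow hB h hq))]
    exact rpow_sub_le hq hq1 hB h
  · rw [abs_of_nonpos (sub_nonpos.2 h), abs_of_nonpos
      (sub_nonpos.2 (Real.rpow_le_rpow hA h hq)), neg_sub, neg_sub]
    exact rpow_sub_le hq hq1 hA h

lemma int_bdd {F : ℂ → ℝ} (hF : ContinuousOn F {z : ℂ | ‖z‖ < 1}) {M : ℝ}
    (hM : ∀ z ∈ {z : ℂ | ‖z‖ < 1}, ‖F z‖ ≤ M) :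
    IntegrableOn F {z : ℂ | ‖z‖ < 1} volume :=
  ⟨hF.aestronglyMeasurable hSm,
    HasFiniteIntegral.restrict_of_bounded M hSfin
      (by filter_upwards [ae_restrict_mem hSm] with z hz using hM z hz)⟩


end BergmanSmallPAux

open BergmanSmallPAux Real Set in
/-- For `0 < p < 1/2`, the functions `f(z) = (1+z)^{4/p}` and `g(z) = -f(-z) = -(1-z)^{4/p}`
(principal branches) belong to the Bergman space `A^p` but fail the triangle
inequality for `‖·‖_{A^p}`. -/
theorem bergman_triangle_fails_small_p (p : ℝ) (hp0 : 0 < p) (hp1 : p < 1 / 2)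
    (f g : ℂ → ℂ)
    (hf : ∀ z : ℂ, f z = (1 + z) ^ ((4 / p : ℝ) : ℂ))
    (hg : ∀ z : ℂ, g z = -((1 - z) ^ ((4 / p : ℝ) : ℂ))) :
    MeasureTheory.IntegrableOn (fun z => ‖f z‖ ^ p) {z : ℂ | ‖z‖ < 1} ∧
    MeasureTheory.IntegrableOn (fun z => ‖g z‖ ^ p) {z : ℂ | ‖z‖ < 1} ∧
    ((∫ z in {z : ℂ | ‖z‖ < 1}, ‖f z + g z‖ ^ p) / Real.pi) ^ (1 / p) >
      ((∫ z in {z : ℂ | ‖z‖ < 1}, ‖f z‖ ^ p) / Real.pi) ^ (1 / p) +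
        ((∫ z in {z : ℂ | ‖z‖ < 1}, ‖g z‖ ^ p) / Real.pi) ^ (1 / p) := by
  have hp := hp0.ne'
  have hpi := Real.pi_pos
  have hple : p ≤ 1 := by linarith
  -- pointwise norm identities
  have hfe : ∀ z : ℂ, ‖f z‖ ^ p = ‖(1:ℂ) + z‖ ^ (4:ℕ) := by
    intro z
    rw [hf z, Complex.norm_cpow_real,
      ← Real.rpow_natCast ‖1+z‖ 4,
      ← Real.rpow_mul (norm_nonneg _), div_mul_cancel₀ _ hp]
    norm_num
  have hge : ∀ z : ℂ, ‖g z‖ ^ p = ‖(1:ℂ) - z‖ ^ (4:ℕ) := by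
    intro z
    rw [hg z, norm_neg, Complex.norm_cpow_real,
      ← Real.rpow_natCast ‖1-z‖ 4,
      ← Real.rpow_mul (norm_nonneg _), div_mul_cancel₀ _ hp]
    norm_num
  -- the two basic integrals
  have d1 : (∫ z in {z : ℂ | ‖z‖ < 1}, ‖(1:ℂ) + z‖ ^ (4:ℕ)) = 10 * π / 3 := by
    have h := diskA 1 (by norm_num)
    simpa using h
  have d2 : (∫ z in {z : ℂ | ‖z‖ < 1}, ‖(1:ℂ) - z‖ ^ (4:ℕ)) = 10 * π / 3 := by
    have h := diskA (-1) (by norm_num)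
    simpa [sub_eq_add_neg] using h
  -- norm bounds on the disk
  have hb1 : ∀ z ∈ {z : ℂ | ‖z‖ < 1}, ‖(1:ℂ) + z‖ ^ (4:ℕ) ≤ 16 := by
    intro z hz
    have h2 : ‖(1:ℂ) + z‖ ≤ 2 := by
      calc ‖(1:ℂ) + z‖ ≤ ‖(1:ℂ)‖ + ‖z‖ := norm_add_le _ _
        _ ≤ 2 := by simp only [norm_one]; linarith [Set.mem_setOf_eq ▸ hz]
    calc ‖(1:ℂ) + z‖ ^ (4:ℕ) ≤ 2 ^ (4:ℕ) := pow_le_pow_left₀ (norm_nonneg _) h2 4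
      _ = 16 := by norm_num
  have hb2 : ∀ z ∈ {z : ℂ | ‖z‖ < 1}, ‖(1:ℂ) - z‖ ^ (4:ℕ) ≤ 16 := by
    intro z hz
    have h2 : ‖(1:ℂ) - z‖ ≤ 2 := by
      calc ‖(1:ℂ) - z‖ ≤ ‖(1:ℂ)‖ + ‖z‖ := norm_sub_le _ _
        _ ≤ 2 := by simp only [norm_one]; linarith [Set.mem_setOf_eq ▸ hz]
    calc ‖(1:ℂ) - z‖ ^ (4:ℕ) ≤ 2 ^ (4:ℕ) := pow_le_pow_left₀ (norm_nonneg _) h2 4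
      _ = 16 := by norm_num
  -- integrability of the first two
  have hIf : MeasureTheory.IntegrableOn (fun z => ‖f z‖ ^ p) {z : ℂ | ‖z‖ < 1} := by
    rw [show (fun z : ℂ => ‖f z‖ ^ p) = fun z : ℂ => ‖(1:ℂ) + z‖ ^ (4:ℕ) from funext hfe]
    exact int_bdd ((((continuous_const.add continuous_id).norm).pow 4).continuousOn) (M := 16)
      (fun z hz => by rw [Real.norm_eq_abs, abs_of_nonneg (by positivity)]; exact hb1 z hz)
  have hIg : MeasureTheory.IntegrableOn (fun z => ‖g z‖ ^ p) {z : ℂ | ‖z‖ < 1} := by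
    rw [show (fun z : ℂ => ‖g z‖ ^ p) = fun z : ℂ => ‖(1:ℂ) - z‖ ^ (4:ℕ) from funext hge]
    exact int_bdd ((((continuous_const.sub continuous_id).norm).pow 4).continuousOn) (M := 16)
      (fun z hz => by rw [Real.norm_eq_abs, abs_of_nonneg (by positivity)]; exact hb2 z hz)
  -- integrability of the sum
  have hfg_eq : (fun z : ℂ => f z + g z)
      = fun z : ℂ => (1 + z) ^ ((4 / p : ℝ) : ℂ) - (1 - z) ^ ((4 / p : ℝ) : ℂ) :=
    funext fun z => by rw [hf z, hg z]; ring
  have hslit : ∀ z ∈ {z : ℂ | ‖z‖ < 1},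
      (1 + z) ∈ Complex.slitPlane ∧ (1 - z) ∈ Complex.slitPlane := by
    intro z hz
    have hre : |z.re| < 1 := lt_of_le_of_lt (Complex.abs_re_le_norm z) hz
    have h1 := abs_lt.1 hre
    constructor
    · exact Complex.mem_slitPlane_iff.2 (Or.inl (by simp [Complex.add_re]; linarith [h1.1]))
    · exact Complex.mem_slitPlane_iff.2 (Or.inl (by simp [Complex.sub_re]; linarith [h1.2]))
  have hfg_cont : ContinuousOn (fun z : ℂ => f z + g z) {z : ℂ | ‖z‖ < 1} := by
    rw [hfg_eq]
    intro z hz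
    obtain ⟨m1, m2⟩ := hslit z hz
    apply ContinuousAt.continuousWithinAt
    exact ((continuousAt_cpow_const m1).comp
        ((continuous_const.add continuous_id).continuousAt)).sub
      ((continuousAt_cpow_const m2).comp
        ((continuous_const.sub continuous_id).continuousAt))
  have hIfg : MeasureTheory.IntegrableOn (fun z => ‖f z + g z‖ ^ p) {z : ℂ | ‖z‖ < 1} := by
    apply int_bdd (hfg_cont.norm.rpow_const (fun z _ => Or.inr hp0.le)) (M := 32)
    intro z hz
    rw [Real.norm_eq_abs, abs_of_nonneg (Real.rpow_nonneg (norm_nonneg _) p)]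
    calc ‖f z + g z‖ ^ p ≤ (‖f z‖ + ‖g z‖) ^ p :=
          Real.rpow_le_rpow (norm_nonneg _) (norm_add_le _ _) hp0.le
      _ ≤ ‖f z‖ ^ p + ‖g z‖ ^ p := rpow_subadd hp0.le hple (norm_nonneg _) (norm_nonneg _)
      _ = ‖(1:ℂ) + z‖ ^ (4:ℕ) + ‖(1:ℂ) - z‖ ^ (4:ℕ) := by rw [hfe z, hge z]
      _ ≤ 32 := by linarith [hb1 z hz, hb2 z hz]
  -- pointwise lower bound for the sum
  have hkey : ∀ z ∈ {z : ℂ | ‖z‖ < 1},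
      8*|z.re| * (1+z.re^2+z.im^2) ≤ ‖f z + g z‖ ^ p := by
    intro z hz
    have e1 : ‖(1:ℂ) + z‖ ^ (2:ℕ) = (1+z.re)^2 + z.im^2 := by
      rw [Complex.sq_norm, Complex.normSq_apply]
      simp [Complex.add_re, Complex.add_im]
      ring
    have e2 : ‖(1:ℂ) - z‖ ^ (2:ℕ) = (1-z.re)^2 + z.im^2 := by
      rw [Complex.sq_norm, Complex.normSq_apply]
      simp [Complex.sub_re, Complex.sub_im]
      ring
    have e4 : ‖(1:ℂ) + z‖ ^ (4:ℕ) = ((1+z.re)^2 + z.im^2)^2 := by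
      rw [show (4:ℕ) = 2*2 from rfl, pow_mul, e1]
    have e5 : ‖(1:ℂ) - z‖ ^ (4:ℕ) = ((1-z.re)^2 + z.im^2)^2 := by
      rw [show (4:ℕ) = 2*2 from rfl, pow_mul, e2]
    have hdiff : ‖f z‖ ^ p - ‖g z‖ ^ p = 8*z.re*(1+z.re^2+z.im^2) := by
      rw [hfe z, hge z, e4, e5]; ring
    have habs : |‖f z‖ ^ p - ‖g z‖ ^ p| = 8*|z.re| * (1+z.re^2+z.im^2) := by
      rw [hdiff, abs_mul, abs_mul, abs_of_nonneg (by positivity : (0:ℝ) ≤ 1+z.re^2+z.im^2),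
        abs_of_nonneg (by norm_num : (0:ℝ) ≤ (8:ℝ))]
    have h1 : |‖f z‖ - ‖g z‖| ≤ ‖f z + g z‖ := by
      have h := abs_norm_sub_norm_le (f z) (-(g z))
      rwa [norm_neg, sub_neg_eq_add] at h
    calc 8*|z.re| * (1+z.re^2+z.im^2) = |‖f z‖ ^ p - ‖g z‖ ^ p| := habs.symm
      _ ≤ |‖f z‖ - ‖g z‖| ^ p :=
          abs_rpow_sub hp0.le hple (norm_nonneg _) (norm_nonneg _)
      _ ≤ ‖f z + g z‖ ^ p := Real.rpow_le_rpow (abs_nonneg _) h1 hp0.le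
  -- lower bound for the third integral
  have hI3 : 256/15 ≤ ∫ z in {z : ℂ | ‖z‖ < 1}, ‖f z + g z‖ ^ p := by
    rw [← diskB]
    apply setIntegral_mono_on ?_ hIfg hSm hkey
    apply int_bdd (Continuous.continuousOn (by fun_prop)) (M := 24)
    intro z hz
    have hre : |z.re| ≤ 1 := (lt_of_le_of_lt (Complex.abs_re_le_norm z) hz).le
    have him : |z.im| ≤ 1 := (lt_of_le_of_lt (Complex.abs_im_le_norm z) hz).le
    rw [Real.norm_eq_abs, abs_of_nonneg (by positivity)]
    nlinarith [abs_nonneg z.re, abs_nonneg z.im, sq_abs z.re, sq_abs z.im]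
  refine ⟨hIf, hIg, ?_⟩
  have q1 : (∫ z in {z : ℂ | ‖z‖ < 1}, ‖f z‖ ^ p) = 10 * π / 3 := by
    rw [show (fun z : ℂ => ‖f z‖ ^ p) = fun z : ℂ => ‖(1:ℂ) + z‖ ^ (4:ℕ) from funext hfe]
    exact d1
  have q2 : (∫ z in {z : ℂ | ‖z‖ < 1}, ‖g z‖ ^ p) = 10 * π / 3 := by
    rw [show (fun z : ℂ => ‖g z‖ ^ p) = fun z : ℂ => ‖(1:ℂ) - z‖ ^ (4:ℕ) from funext hge]
    exact d2
  rw [q1, q2]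
  have hq : (10 * π / 3) / π = 10/3 := by field_simp
  rw [hq]
  -- final numeric inequality
  have h2p : (2:ℝ) ^ p < 1.415 := by
    have ha : (2:ℝ) ^ p < 2 ^ ((1:ℝ)/2) :=
      (Real.rpow_lt_rpow_left_iff (by norm_num)).2 (by linarith)
    have hb : (2:ℝ) ^ ((1:ℝ)/2) = Real.sqrt 2 := (Real.sqrt_eq_rpow 2).symm
    have hc : Real.sqrt 2 < 1.415 := by
      rw [show (1.415:ℝ) = Real.sqrt (1.415^2) from
        (Real.sqrt_sq (by norm_num)).symm]
      exact Real.sqrt_lt_sqrt (by norm_num) (by norm_num)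
    linarith [hb ▸ ha]
  have hX : (2:ℝ) ^ p * (10/3) < (∫ z in {z : ℂ | ‖z‖ < 1}, ‖f z + g z‖ ^ p) / π := by
    have hXlb : (256/15) / π ≤ (∫ z in {z : ℂ | ‖z‖ < 1}, ‖f z + g z‖ ^ p) / π := by
      gcongr
    have hnum : (2:ℝ)^p * (10/3) < (256/15)/π := by
      rw [lt_div_iff₀ hpi]
      nlinarith [h2p, Real.pi_lt_d2, hpi, Real.rpow_nonneg (by norm_num : (0:ℝ) ≤ 2) p]
    exact hnum.trans_le hXlb
  have hsum : (10/3:ℝ)^(1/p) + (10/3:ℝ)^(1/p) = ((2:ℝ)^p * (10/3))^(1/p) := by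
    rw [Real.mul_rpow (Real.rpow_nonneg (by norm_num) p) (by norm_num),
      ← Real.rpow_mul (by norm_num : (0:ℝ) ≤ 2), mul_one_div, div_self hp, Real.rpow_one]
    ring
  rw [hsum]
  exact Real.rpow_lt_rpow (by positivity) hX (by positivity)
end
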